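/- Let $l > 0$ and $R > 0$. There exists $C_R \geq 0$ such that for all $a \in \mathbb{R}$ and all $\lambda = x + iy \in \mathbb{C}^*$ with $(a - \lambda)^2 e^{2 i \lambda l} = (a + \lambda)^2$ and $|x| \leq R$, one has $|y| \leq C_R$. That is, solutions of the eigenvalue equation with bounded real part have uniformly bounded imaginary part, uniformly in the parameter $a$. -/

import Mathlib

set_option maxHeartbeats 1000000 in
/-- Solutions `λ = x + i y` of the eigenvalue equation
`(a - λ)² e^{2iλl} = (a + λ)²` with `|x| ≤ R` have uniformly bounded imaginary
part, uniformly in the parameter `a ∈ ℝ`. -/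
theorem imaginary_part_uniformly_bounded
    (l R : ℝ) (hl : 0 < l) (hR : 0 < R) :
    ∃ C : ℝ, 0 ≤ C ∧ ∀ (a x y : ℝ),
      (x : ℂ) + (y : ℂ) * Complex.I ≠ 0 →
      ((a : ℂ) - ((x : ℂ) + (y : ℂ) * Complex.I)) ^ 2 *
          Complex.exp (2 * Complex.I * ((x : ℂ) + (y : ℂ) * Complex.I) * (l : ℂ))
        = ((a : ℂ) + ((x : ℂ) + (y : ℂ) * Complex.I)) ^ 2 →
      |x| ≤ R → |y| ≤ C := by
  refine ⟨max (8*R) (1/l), le_trans (by positivity) (le_max_left _ _), ?_⟩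
  intro a x y hne heq hx
  by_contra hy
  push_neg at hy
  have hC8 : 8*R ≤ max (8*R) (1/l) := le_max_left _ _
  have hCl : 1/l ≤ max (8*R) (1/l) := le_max_right _ _
  have hCpos : (0:ℝ) < max (8*R) (1/l) := lt_of_lt_of_le (by positivity) hC8
  have hy8R : 8*R < |y| := lt_of_le_of_lt hC8 hy
  have hyl1 : 1/l < |y| := lt_of_le_of_lt hCl hy
  have hy0 : y ≠ 0 := by
    intro h; rw [h] at hy; simp at hy; linarith
  -- take absolute values of the eigenvalue equation
  have habs := congrArg (fun z : ℂ => ‖z‖) heq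
  simp only [norm_mul, norm_pow, Complex.norm_exp] at habs
  have hre : (2 * Complex.I * ((x:ℂ) + (y:ℂ) * Complex.I) * (l:ℂ)).re = -(2*y*l) := by
    simp [Complex.mul_re, Complex.mul_im]
  rw [hre] at habs
  have hD : ‖(a:ℂ) - ((x:ℂ)+(y:ℂ)*Complex.I)‖ ^ 2 = (a-x)^2 + y^2 := by
    rw [Complex.sq_norm, Complex.normSq_apply]; simp; ring
  have hN : ‖(a:ℂ) + ((x:ℂ)+(y:ℂ)*Complex.I)‖ ^ 2 = (a+x)^2 + y^2 := by
    rw [Complex.sq_norm, Complex.normSq_apply]; simp; ring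
  rw [hD, hN] at habs
  -- habs : ((a-x)^2 + y^2) * Real.exp (-(2*y*l)) = (a+x)^2 + y^2
  obtain ⟨D, hDdef⟩ : ∃ D : ℝ, D = (a-x)^2 + y^2 := ⟨_, rfl⟩
  obtain ⟨N, hNdef⟩ : ∃ N : ℝ, N = (a+x)^2 + y^2 := ⟨_, rfl⟩
  rw [← hDdef, ← hNdef] at habs
  have hy2 : 0 < y^2 := by positivity
  have hDpos : 0 < D := by rw [hDdef]; positivity
  have hyabs : 0 < |y| := abs_pos.mpr hy0
  have hsqy : |y|^2 = y^2 := sq_abs y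
  -- key estimate : |N - D| ≤ D/2
  have h1 : N - D = 4*a*x := by rw [hNdef, hDdef]; ring
  have h2 : |N - D| ≤ 4 * |a| * R := by
    rw [h1]
    have e1 : |4*a*x| = 4 * |a| * |x| := by
      rw [abs_mul, abs_mul]
      norm_num
    rw [e1]
    have := abs_nonneg a
    nlinarith
  have hbound : 4 * |a| * R ≤ D / 2 := by
    rcases le_or_gt |a| (2*R) with hca | hca
    · -- small |a| : 4|a|R ≤ 8R², and D ≥ y² > (8R)²
      have hyc : (8*R)^2 ≤ y^2 := by
        rw [← hsqy]
        nlinarith [abs_nonneg y]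
      have hDy : y^2 ≤ D := by rw [hDdef]; nlinarith [sq_nonneg (a-x)]
      have h5 := mul_le_mul_of_nonneg_left hca (by positivity : (0:ℝ) ≤ 4*R)
      nlinarith
    · -- large |a| : D ≥ 2|a-x||y| ≥ |a||y|, and 4R ≤ |y|/2
      have hax : |a| - R ≤ |a - x| := by
        have h3 : |a| - |x| ≤ |a - x| := abs_sub_abs_le_abs_sub a x
        linarith
      have hamg : 2 * |a-x| * |y| ≤ D := by
        have h5 := two_mul_le_add_sq |a-x| |y|
        rw [sq_abs, sq_abs] at h5
        rw [hDdef]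
        linarith
      have hD2 : |a| * |y| ≤ D := by
        have h4 : |a| ≤ 2*(|a| - R) := by linarith
        have t1 : |a| * |y| ≤ (2*(|a| - R)) * |y| :=
          mul_le_mul_of_nonneg_right h4 (abs_nonneg y)
        have t2 : (2*(|a| - R)) * |y| ≤ 2 * |a-x| * |y| :=
          mul_le_mul_of_nonneg_right (by linarith : 2*(|a| - R) ≤ 2 * |a-x|) (abs_nonneg y)
        linarith
      have h4R : 4*R ≤ |y|/2 := by linarith
      have t3 := mul_le_mul_of_nonneg_left h4R (abs_nonneg a)
      linarith
  have hdiff : |N - D| ≤ D/2 := h2.trans hbound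
  have hNlb : D/2 ≤ N := by
    have := (abs_le.mp hdiff).1; linarith
  have hNub : N ≤ 3*D/2 := by
    have := (abs_le.mp hdiff).2; linarith
  -- hence 1/2 ≤ exp(-(2yl)) ≤ 3/2
  have he : Real.exp (-(2*y*l)) = N / D := by
    rw [eq_div_iff (ne_of_gt hDpos), mul_comm]
    exact habs
  have hexp_lb : (1:ℝ)/2 ≤ Real.exp (-(2*y*l)) := by
    rw [he, le_div_iff₀ hDpos]
    linarith
  have hexp_ub : Real.exp (-(2*y*l)) ≤ 3/2 := by
    rw [he, div_le_iff₀ hDpos]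
    linarith
  -- contradiction with exponential growth/decay
  have h2exp : (3:ℝ) ≤ Real.exp 2 := by
    have := Real.add_one_le_exp (2:ℝ)
    linarith
  have hyl : 1 < |y| * l := by
    calc (1:ℝ) = (1/l) * l := by field_simp
      _ < |y| * l := mul_lt_mul_of_pos_right hyl1 hl
  rcases lt_or_gt_of_ne hy0 with hneg | hpos
  · -- y < 0 : -(2yl) > 2, so exp ≥ 3 > 3/2
    have hay : |y| = -y := abs_of_neg hneg
    have hgt : (2:ℝ) ≤ -(2*y*l) := by rw [hay] at hyl; linarith
    have := Real.exp_le_exp.mpr hgt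
    linarith
  · -- y > 0 : -(2yl) < -2, so exp ≤ 1/3 < 1/2
    have hay : |y| = y := abs_of_pos hpos
    have hlt : -(2*y*l) ≤ -2 := by rw [hay] at hyl; linarith
    have h5 := Real.exp_le_exp.mpr hlt
    have h6 : Real.exp (-2) ≤ 1/3 := by
      rw [Real.exp_neg, inv_le_comm₀ (Real.exp_pos 2) (by norm_num)]
      linarith
    linarith
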